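/- arXiv:2007.09403 — 6 statements merged into one kernel-verified Lean document; each statement's English description precedes it below -/
import Mathlib

section
/- Let s be a natural number and let (A, +, ∘) be a left brace such that A^s = 0, where A^1 = A and A^{i+1} is the additive subgroup generated by all elements a*b with a ∈ A and b ∈ A^i. Let a, b, c ∈ A, and define inductively d_0 = a, d_0' = b, and d_{i+1} = d_i + d_i', d_{i+1}' = d_i * d_i' for all i ≥ 0. Then (a+b)*c = a*c + b*c + Σ_{i=0}^{2s} (−1)^{i+1} ( (d_i * d_i') * c − d_i * (d_i' * c) ). -/
/-- A left brace: an abelian group `(A, +)` together with a group operation `∘`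
satisfying `a ∘ (b + c) + a = a ∘ b + a ∘ c`. -/
structure LeftBrace (A : Type*) [AddCommGroup A] where
  circ : A → A → A
  one : A
  inv : A → A
  circ_assoc : ∀ a b c : A, circ (circ a b) c = circ a (circ b c)
  one_circ : ∀ a : A, circ one a = a
  circ_one : ∀ a : A, circ a one = a
  inv_circ : ∀ a : A, circ (inv a) a = one
  left_dist : ∀ a b c : A, circ a (b + c) + a = circ a b + circ a c

/-- `a * b = a ∘ b - a - b`. -/
def LeftBrace.star {A : Type*} [AddCommGroup A] (B : LeftBrace A) (a b : A) : A :=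
  B.circ a b - a - b

/-- The left radical chain: `leftChain B i` is `A^i` for `i ≥ 1` (with the
convention `leftChain B 0 = ⊤`); `A^1 = A` and `A^{i+1}` is the additive
subgroup generated by all `a * b` with `a ∈ A`, `b ∈ A^i`. -/
def LeftBrace.leftChain {A : Type*} [AddCommGroup A] (B : LeftBrace A) : ℕ → AddSubgroup A
  | 0 => ⊤
  | 1 => ⊤
  | (n+2) => AddSubgroup.closure {x : A | ∃ a : A, ∃ b ∈ LeftBrace.leftChain B (n+1), x = B.star a b}

namespace LeftBrace

variable {A : Type*} [AddCommGroup A] (B : LeftBrace A)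

lemma circZero (a : A) : B.circ a 0 = a := by
  have h := B.left_dist a 0 0
  rw [add_zero] at h
  exact (add_left_cancel h).symm

lemma zeroEqOne : (0 : A) = B.one :=
  (B.one_circ 0).symm.trans (B.circZero B.one)

lemma zeroCirc (c : A) : B.circ 0 c = c := by
  rw [B.zeroEqOne]; exact B.one_circ c

lemma starZero (a : A) : B.star a 0 = 0 := by
  simp [LeftBrace.star, B.circZero]

lemma zeroStar (c : A) : B.star 0 c = 0 := by
  simp [LeftBrace.star, B.zeroCirc]

lemma lamSub (x u v : A) : B.circ x (u - v) = B.circ x u - B.circ x v + x := by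
  have h := B.left_dist x (u - v) v
  rw [sub_add_cancel] at h
  calc B.circ x (u - v) = B.circ x (u - v) + B.circ x v - B.circ x v := by abel
    _ = B.circ x u + x - B.circ x v := by rw [← h]
    _ = B.circ x u - B.circ x v + x := by abel

lemma starCirc (x y c : A) :
    B.star (B.circ x y) c = B.star x (B.star y c) + B.star x c + B.star y c := by
  simp only [LeftBrace.star]
  rw [B.circ_assoc, B.lamSub, B.lamSub]
  abel

end LeftBrace

theorem statement0 {A : Type*} [AddCommGroup A] (B : LeftBrace A) (s : ℕ)
    (hs : B.leftChain s = ⊥) (a b c : A)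
    (d d' : ℕ → A)
    (hd0 : d 0 = a) (hd0' : d' 0 = b)
    (hd : ∀ i, d (i + 1) = d i + d' i)
    (hd' : ∀ i, d' (i + 1) = B.star (d i) (d' i)) :
    B.star (a + b) c = B.star a c + B.star b c +
      ∑ i ∈ Finset.range (2 * s + 1),
        (-1 : ℤ) ^ (i + 1) •
          (B.star (B.star (d i) (d' i)) c - B.star (d i) (B.star (d' i) c)) := by
  have hstep : ∀ i, B.star (d (i+1) + d' (i+1)) c - B.star (d (i+1)) c - B.star (d' (i+1)) c
      = -(B.star (B.star (d i) (d' i)) c - B.star (d i) (B.star (d' i) c))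
        - (B.star (d i + d' i) c - B.star (d i) c - B.star (d' i) c) := by
    intro i
    rw [hd i, hd' i]
    have hc : d i + d' i + B.star (d i) (d' i) = B.circ (d i) (d' i) := by
      simp only [LeftBrace.star]; abel
    rw [hc, B.starCirc]
    abel
  have key : ∀ n, B.star (d 0 + d' 0) c - B.star (d 0) c - B.star (d' 0) c
      = (∑ i ∈ Finset.range (n+1), (-1:ℤ)^(i+1) •
          (B.star (B.star (d i) (d' i)) c - B.star (d i) (B.star (d' i) c)))
        + (-1:ℤ)^(n+1) • (B.star (d (n+1) + d' (n+1)) c - B.star (d (n+1)) c - B.star (d' (n+1)) c) := by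
    have hsm : ∀ (k : ℕ) (x y : A), (-1:ℤ)^(k+1) • (-x - y)
        = (-1:ℤ)^(k+1+1) • x + (-1:ℤ)^(k+1+1) • y := by
      intro k x y
      rw [pow_succ (-1:ℤ) (k+1), mul_neg_one, neg_smul, neg_smul, smul_sub, smul_neg]
      abel
    intro n
    induction n with
    | zero =>
      rw [Finset.sum_range_one, hstep 0]
      rw [show ((-1:ℤ)^(0+1)) = -1 by norm_num, neg_smul, one_smul, neg_smul, one_smul]
      abel
    | succ n ih =>
      have h2 : B.star (d (n+1) + d' (n+1)) c - B.star (d (n+1)) c - B.star (d' (n+1)) c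
          = -(B.star (B.star (d (n+1)) (d' (n+1))) c - B.star (d (n+1)) (B.star (d' (n+1)) c))
            - (B.star (d (n+1+1) + d' (n+1+1)) c - B.star (d (n+1+1)) c - B.star (d' (n+1+1)) c) := by
        rw [hstep (n+1)]; abel
      rw [ih, h2, hsm]
      conv_rhs => rw [Finset.sum_range_succ]
      exact (add_assoc _ _ _).symm
  have hmem : ∀ i, d' i ∈ B.leftChain (i+1) := by
    intro i
    induction i with
    | zero => exact AddSubgroup.mem_top _
    | succ i ih =>
      rw [hd' i]
      exact AddSubgroup.subset_closure ⟨d i, d' i, ih, rfl⟩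
  have hds : d' s = 0 := by
    cases s with
    | zero =>
      have h0 : d' 0 ∈ B.leftChain 0 := AddSubgroup.mem_top _
      rw [hs] at h0
      exact AddSubgroup.mem_bot.mp h0
    | succ k =>
      have h1 : d' k = 0 := by
        have h0 := hmem k
        rw [hs] at h0
        exact AddSubgroup.mem_bot.mp h0
      rw [hd' k, h1, B.starZero]
  have dz : ∀ j, d' (s + j) = 0 := by
    intro j
    induction j with
    | zero => simpa using hds
    | succ j ih =>
      rw [show s + (j+1) = (s+j) + 1 from rfl, hd', ih, B.starZero]
  have hE0 : d' (2*s+1) = 0 := by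
    have h := dz (s+1)
    rwa [show s + (s+1) = 2*s+1 by ring] at h
  have hkey := key (2*s)
  have hEz : B.star (d (2*s+1) + d' (2*s+1)) c - B.star (d (2*s+1)) c - B.star (d' (2*s+1)) c = 0 := by
    rw [hE0, add_zero, B.zeroStar]
    abel
  rw [show 2*s+1 = 2*s+1 from rfl, hEz, smul_zero, add_zero] at hkey
  rw [← hd0, ← hd0', ← hkey]
  abel
end

section
/- Let s be a natural number and let (A, +, ∘) be a left brace such that A^s = 0, where A^1 = A and A^{i+1} is the additive subgroup generated by all elements a*b with a ∈ A and b ∈ A^i. Then for all a, b, c ∈ A, the element a*(b*c) − (a*b)*c − b*(a*c) + (b*a)*c lies in the additive subgroup of (A,+) generated by all iterated *-products (with any distribution of brackets) whose factors are taken from {a, b} followed by a single final factor c, in which at least three factors from {a, b} occur and in which both a and b occur at least once. -/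
/-- `BraceWord B a b c w na nb t` says that `w` is an iterated `*`-product whose
leaves are copies of `a` (appearing `na` times) and of `b` (appearing `nb` times),
and, if `t = true`, additionally a single copy of `c` as the rightmost (final) leaf. -/
inductive BraceWord {A : Type*} [AddCommGroup A] (B : LeftBrace A) (a b c : A) :
    A → ℕ → ℕ → Bool → Prop
  | base_a : BraceWord B a b c a 1 0 false
  | base_b : BraceWord B a b c b 0 1 false
  | base_c : BraceWord B a b c c 0 0 true
  | node {u v : A} {na₁ nb₁ na₂ nb₂ : ℕ} {t : Bool} :
      BraceWord B a b c u na₁ nb₁ false → BraceWord B a b c v na₂ nb₂ t →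
      BraceWord B a b c (B.star u v) (na₁ + na₂) (nb₁ + nb₂) t


namespace LeftBrace
variable {A : Type*} [AddCommGroup A] (B : LeftBrace A)

lemma circ_add (x y z : A) : B.circ x (y + z) = B.circ x y + B.circ x z - x := by
  have := B.left_dist x y z
  rw [eq_sub_iff_add_eq]; exact this

lemma circ_zero (x : A) : B.circ x 0 = x := by
  have := B.left_dist x 0 0
  simp only [add_zero] at this
  exact (add_left_cancel (a := B.circ x 0) (by rw [← this])).symm

lemma one_eq_zero : B.one = (0 : A) := by
  have h1 := B.one_circ (0 : A)
  have h2 := B.circ_zero B.one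
  rw [h1] at h2; exact h2.symm

lemma zero_circ (x : A) : B.circ 0 x = x := by
  have := B.one_circ x; rwa [B.one_eq_zero] at this

lemma circ_neg (x y : A) : B.circ x (-y) = 2 • x - B.circ x y := by
  have h := B.circ_add x y (-y)
  rw [add_neg_cancel, B.circ_zero, eq_sub_iff_add_eq] at h
  rw [two_nsmul, eq_sub_iff_add_eq, add_comm]
  exact h.symm

lemma circ_sub (x y z : A) : B.circ x (y - z) = B.circ x y - B.circ x z + x := by
  have h := B.circ_add x (y - z) z
  rw [sub_add_cancel] at h
  rw [h]; abel

lemma star_add (x y z : A) : B.star x (y + z) = B.star x y + B.star x z := by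
  unfold LeftBrace.star
  rw [B.circ_add]; abel

lemma circ_eq (x y : A) : B.circ x y = x + y + B.star x y := by
  unfold LeftBrace.star; abel

/-- star as an additive hom in the second argument -/
def starHom (x : A) : A →+ A := AddMonoidHom.mk' (B.star x) (B.star_add x)

@[simp] lemma starHom_apply (x y : A) : B.starHom x y = B.star x y := rfl

@[simp] lemma star_zero (x : A) : B.star x 0 = 0 := by
  simpa using (B.starHom x).map_zero

lemma star_neg (x y : A) : B.star x (-y) = -B.star x y := by
  simpa using (B.starHom x).map_neg y

lemma star_sub (x y z : A) : B.star x (y - z) = B.star x y - B.star x z := by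
  simpa using (B.starHom x).map_sub y z

@[simp] lemma zero_star (x : A) : B.star 0 x = 0 := by
  unfold LeftBrace.star; rw [B.zero_circ]; abel

lemma star3 (x y z : A) : B.star (B.circ x y) z
    = B.star x (B.star y z) + B.star x z + B.star y z := by
  unfold LeftBrace.star
  rw [B.circ_assoc]
  rw [show B.circ y z - y - z = (B.circ y z - y) - z from rfl]
  rw [B.circ_sub, B.circ_sub]
  abel

lemma circ_left_cancel (x : A) {u v : A} (h : B.circ x u = B.circ x v) : u = v := by
  have := congrArg (B.circ (B.inv x)) h
  rwa [← B.circ_assoc, ← B.circ_assoc, B.inv_circ, B.one_circ, B.one_circ] at this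

lemma circ_inv_right (x : A) : B.circ x (B.inv x) = B.one := by
  apply B.circ_left_cancel (B.inv x)
  rw [← B.circ_assoc, B.inv_circ, B.one_circ, B.circ_one]

end LeftBrace

namespace LeftBrace
variable {A : Type*} [AddCommGroup A] (B : LeftBrace A)

lemma chain_star {j : ℕ} {y : A} (hy : y ∈ B.leftChain j) (x : A) :
    B.star x y ∈ B.leftChain (j + 1) := by
  cases j with
  | zero => exact AddSubgroup.mem_top _
  | succ n =>
    show _ ∈ B.leftChain (n + 2)
    exact AddSubgroup.subset_closure ⟨x, y, hy, rfl⟩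

lemma chain_anti_succ (j : ℕ) : B.leftChain (j + 1) ≤ B.leftChain j := by
  induction j with
  | zero => exact le_top
  | succ n ih =>
    cases n with
    | zero => exact le_top
    | succ k =>
      show B.leftChain (k + 1 + 2) ≤ B.leftChain (k + 2)
      rw [show B.leftChain (k+1+2) = AddSubgroup.closure
        {x : A | ∃ a : A, ∃ b ∈ B.leftChain (k+2), x = B.star a b} from rfl]
      apply AddSubgroup.closure_le _ |>.2
      rintro w ⟨u, v, hv, rfl⟩
      exact AddSubgroup.subset_closure ⟨u, v, ih hv, rfl⟩

lemma chain_anti {i j : ℕ} (h : i ≤ j) : B.leftChain j ≤ B.leftChain i := by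
  induction h with
  | refl => exact le_rfl
  | step h ih => exact le_trans (B.chain_anti_succ _) ih

lemma iter_chain (x y : A) (k : ℕ) : (B.star x)^[k] y ∈ B.leftChain k := by
  induction k with
  | zero => exact AddSubgroup.mem_top _
  | succ n ih =>
    rw [Function.iterate_succ_apply']
    exact B.chain_star ih x

section NilpotentStuff
variable (s : ℕ)

/-- truncated inverse of `λ_x` -/
def lamInv (x y : A) : A := ∑ k ∈ Finset.range s, ((-1 : ℤ) ^ k) • (B.star x)^[k] y

variable {s}
variable (hs : B.leftChain s = ⊥)
include hs

lemma iter_s_zero (x y : A) : (B.star x)^[s] y = 0 := by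
  have := B.iter_chain x y s
  rw [hs] at this
  simpa using this

lemma lamInv_spec (x y : A) : lamInv B s x y + B.star x (lamInv B s x y) = y := by
  have key : ∀ n : ℕ,
      (∑ k ∈ Finset.range n, ((-1 : ℤ) ^ k) • (B.star x)^[k] y)
      + B.star x (∑ k ∈ Finset.range n, ((-1 : ℤ) ^ k) • (B.star x)^[k] y)
      = y - ((-1 : ℤ) ^ n) • (B.star x)^[n] y := by
    intro n
    induction n with
    | zero => simp
    | succ n ih =>
      rw [Finset.sum_range_succ]
      have hmap : B.star x ((∑ k ∈ Finset.range n, ((-1 : ℤ) ^ k) • (B.star x)^[k] y)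
          + ((-1 : ℤ) ^ n) • (B.star x)^[n] y)
          = B.star x (∑ k ∈ Finset.range n, ((-1 : ℤ) ^ k) • (B.star x)^[k] y)
          + ((-1 : ℤ) ^ n) • (B.star x)^[n+1] y := by
        rw [B.star_add]
        congr 1
        rw [show B.star x (((-1:ℤ)^n) • (B.star x)^[n] y) = B.starHom x (((-1:ℤ)^n) • (B.star x)^[n] y) from rfl]
        rw [map_zsmul]
        rw [Function.iterate_succ_apply']
        rfl
      rw [hmap]
      have : (∑ k ∈ Finset.range n, ((-1 : ℤ) ^ k) • (B.star x)^[k] y)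
          + ((-1 : ℤ) ^ n) • (B.star x)^[n] y
          + (B.star x (∑ k ∈ Finset.range n, ((-1 : ℤ) ^ k) • (B.star x)^[k] y)
          + ((-1 : ℤ) ^ n) • (B.star x)^[n+1] y)
          = ((∑ k ∈ Finset.range n, ((-1 : ℤ) ^ k) • (B.star x)^[k] y)
          + B.star x (∑ k ∈ Finset.range n, ((-1 : ℤ) ^ k) • (B.star x)^[k] y))
          + (((-1 : ℤ) ^ n) • (B.star x)^[n] y + ((-1 : ℤ) ^ n) • (B.star x)^[n+1] y) := by abel
      rw [this, ih]
      have : ((-1 : ℤ) ^ (n+1)) • (B.star x)^[n+1] y = -(((-1 : ℤ) ^ n) • (B.star x)^[n+1] y) := by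
        rw [pow_succ]
        rw [mul_comm]
        rw [mul_smul]
        simp
      rw [this]
      abel
  have := key s
  rw [B.iter_s_zero hs, smul_zero, sub_zero] at this
  exact this

lemma circ_lamInv (x y : A) : B.circ x (lamInv B s x y) = x + y := by
  rw [B.circ_eq]
  have := B.lamInv_spec hs x y
  rw [show x + lamInv B s x y + B.star x (lamInv B s x y)
    = x + (lamInv B s x y + B.star x (lamInv B s x y)) from by abel, this]

lemma circ_decomp (x t : A) : B.circ x (lamInv B s x (t - x)) = t := by
  rw [B.circ_lamInv hs]; abel

lemma inv_eq_neg_lamInv (x : A) : B.inv x = -lamInv B s x x := by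
  apply B.circ_left_cancel x
  rw [B.circ_inv_right, B.circ_neg, B.circ_lamInv hs, B.one_eq_zero, two_nsmul]
  abel

lemma star_inv_eq (x z : A) : B.star (B.inv x) z = -lamInv B s x (B.star x z) := by
  apply B.circ_left_cancel x
  have h1 : B.circ x (B.star (B.inv x) z) = B.circ x (B.circ (B.inv x) z - B.inv x - z) := rfl
  rw [h1, show B.circ (B.inv x) z - B.inv x - z = (B.circ (B.inv x) z - B.inv x) - z from rfl,
    B.circ_sub, B.circ_sub, ← B.circ_assoc, B.circ_inv_right, B.one_eq_zero, B.zero_circ,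
    B.circ_neg, B.circ_lamInv hs]
  rw [B.circ_eq x z, two_nsmul]
  abel

end NilpotentStuff
end LeftBrace

/-- words in `a,b` with recorded right-depth -/
inductive WordD {A : Type*} [AddCommGroup A] (B : LeftBrace A) (a b : A) :
    A → ℕ → ℕ → ℕ → Prop
  | wa : WordD B a b a 1 0 1
  | wb : WordD B a b b 0 1 1
  | node {u v : A} {na₁ nb₁ na₂ nb₂ d₁ d₂ : ℕ} :
      WordD B a b u na₁ nb₁ d₁ → WordD B a b v na₂ nb₂ d₂ →
      WordD B a b (B.star u v) (na₁ + na₂) (nb₁ + nb₂) (d₂ + 1)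

namespace LeftBrace
variable {A : Type*} [AddCommGroup A] (B : LeftBrace A) (a b c : A)

lemma wordD_toBrace {w : A} {na nb d : ℕ} (h : WordD B a b w na nb d) :
    BraceWord B a b c w na nb false := by
  induction h with
  | wa => exact BraceWord.base_a
  | wb => exact BraceWord.base_b
  | node h1 h2 ih1 ih2 => exact BraceWord.node ih1 ih2

lemma wordD_chain {w : A} {na nb d : ℕ} (h : WordD B a b w na nb d) :
    w ∈ B.leftChain d := by
  induction h with
  | wa => exact AddSubgroup.mem_top _
  | wb => exact AddSubgroup.mem_top _
  | node h1 h2 ih1 ih2 => exact B.chain_star ih2 _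

def okW (m : ℕ) (β : Bool) : Set A :=
  {w | ∃ na nb : ℕ, BraceWord B a b c w na nb true ∧ m ≤ na + nb ∧
    (β = true → 1 ≤ na ∧ 1 ≤ nb)}

def Wgr (m : ℕ) (β : Bool) : AddSubgroup A := AddSubgroup.closure (B.okW a b c m β)

def okV (m : ℕ) (β : Bool) (d : ℕ) : Set A :=
  {w | ∃ na nb dd : ℕ, WordD B a b w na nb dd ∧ m ≤ na + nb ∧
    (β = true → 1 ≤ na ∧ 1 ≤ nb) ∧ d ≤ dd}

def Vgr (m : ℕ) (β : Bool) (d : ℕ) : AddSubgroup A := AddSubgroup.closure (B.okV a b m β d)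

lemma Wgr_mono {m m' : ℕ} {β β' : Bool} (hm : m ≤ m') (hβ : β = true → β' = true) :
    B.Wgr a b c m' β' ≤ B.Wgr a b c m β := by
  apply AddSubgroup.closure_le _ |>.2
  rintro w ⟨na, nb, hw, h1, h2⟩
  exact AddSubgroup.subset_closure ⟨na, nb, hw, le_trans hm h1, fun h => h2 (hβ h)⟩

lemma Vgr_mono {m m' d d' : ℕ} {β β' : Bool} (hm : m ≤ m') (hβ : β = true → β' = true)
    (hd : d ≤ d') : B.Vgr a b m' β' d' ≤ B.Vgr a b m β d := by
  apply AddSubgroup.closure_le _ |>.2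
  rintro w ⟨na, nb, dd, hw, h1, h2, h3⟩
  exact AddSubgroup.subset_closure ⟨na, nb, dd, hw, le_trans hm h1, fun h => h2 (hβ h),
    le_trans hd h3⟩

lemma Vgr_le_chain (m : ℕ) (β : Bool) (d : ℕ) : B.Vgr a b m β d ≤ B.leftChain d := by
  apply AddSubgroup.closure_le _ |>.2
  rintro w ⟨na, nb, dd, hw, _, _, h3⟩
  exact B.chain_anti h3 (B.wordD_chain a b hw)

lemma word_star_W {u : A} {na nb : ℕ} (hw : BraceWord B a b c u na nb false)
    {k : ℕ} {γ β' : Bool} (hβ : β' = true → γ = true ∨ (1 ≤ na ∧ 1 ≤ nb))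
    {z : A} (hz : z ∈ B.Wgr a b c k γ) : B.star u z ∈ B.Wgr a b c (k + na + nb) β' := by
  have : B.Wgr a b c k γ ≤ (B.Wgr a b c (k + na + nb) β').comap (B.starHom u) := by
    apply AddSubgroup.closure_le _ |>.2
    rintro w ⟨na', nb', hw', h1, h2⟩
    refine AddSubgroup.subset_closure ⟨na + na', nb + nb', BraceWord.node hw hw', by omega, ?_⟩
    intro h
    rcases hβ h with h' | h'
    · have := h2 h'; omega
    · omega
  exact this hz

lemma word_star_V {u : A} {na nb du : ℕ} (hw : WordD B a b u na nb du)
    {m d : ℕ} {β β' : Bool} (hβ : β' = true → β = true ∨ (1 ≤ na ∧ 1 ≤ nb))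
    {z : A} (hz : z ∈ B.Vgr a b m β d) :
    B.star u z ∈ B.Vgr a b (m + na + nb) β' (d + 1) := by
  have : B.Vgr a b m β d ≤ (B.Vgr a b (m + na + nb) β' (d + 1)).comap (B.starHom u) := by
    apply AddSubgroup.closure_le _ |>.2
    rintro w ⟨na', nb', dd, hw', h1, h2, h3⟩
    refine AddSubgroup.subset_closure ⟨na + na', nb + nb', dd + 1, WordD.node hw hw',
      by omega, ?_, by omega⟩
    intro h
    rcases hβ h with h' | h'
    · have := h2 h'; omega
    · omega
  exact this hz

lemma exists_list_sum {S : Set A} {x : A} (h : x ∈ AddSubgroup.closure S) :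
    ∃ l : List A, (∀ y ∈ l, y ∈ S ∨ -y ∈ S) ∧ l.sum = x := by
  induction h using AddSubgroup.closure_induction with
  | mem w hw => exact ⟨[w], by simp [hw], by simp⟩
  | zero => exact ⟨[], by simp, by simp⟩
  | add x y hx hy ihx ihy =>
    obtain ⟨l1, h1, e1⟩ := ihx
    obtain ⟨l2, h2, e2⟩ := ihy
    refine ⟨l1 ++ l2, ?_, by rw [List.sum_append, e1, e2]⟩
    intro y hy
    rcases List.mem_append.1 hy with h | h
    · exact h1 y h
    · exact h2 y h
  | neg x hx ihx =>
    obtain ⟨l, h1, e1⟩ := ihx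
    refine ⟨l.map (fun t => -t), ?_, ?_⟩
    · intro y hy
      obtain ⟨t, ht, rfl⟩ := List.mem_map.1 hy
      rcases h1 t ht with h | h
      · right; simpa using h
      · left; exact h
    · rw [← e1]
      have : ∀ l' : List A, (l'.map (fun t => -t)).sum = -l'.sum := by
        intro l'
        induction l' with
        | nil => simp
        | cons hd tl ih => simp only [List.map_cons, List.sum_cons, ih]; abel
      exact this l

lemma c_mem_W : c ∈ B.Wgr a b c 0 false :=
  AddSubgroup.subset_closure ⟨0, 0, BraceWord.base_c, by omega, by simp⟩

section Maps
variable {s : ℕ}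

lemma iterate_mem_V {x : A} {m D : ℕ} {β : Bool}
    (hmap : ∀ D' z', z' ∈ B.Vgr a b m β D' → B.star x z' ∈ B.Vgr a b m β (D' + 1))
    {z : A} (hz : z ∈ B.Vgr a b m β D) (k : ℕ) :
    (B.star x)^[k] z ∈ B.Vgr a b m β (D + k) := by
  induction k with
  | zero => simpa using hz
  | succ n ih =>
    rw [Function.iterate_succ_apply']
    exact hmap _ _ ih

lemma lamInv_mem_V {x : A} {m D : ℕ} {β : Bool}
    (hmap : ∀ D' z', z' ∈ B.Vgr a b m β D' → B.star x z' ∈ B.Vgr a b m β (D' + 1))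
    {z : A} (hz : z ∈ B.Vgr a b m β D) :
    B.lamInv s x z ∈ B.Vgr a b m β D := by
  apply AddSubgroup.sum_mem
  intro k _
  refine AddSubgroup.zsmul_mem _ ?_ _
  exact B.Vgr_mono a b le_rfl (fun h => h) (Nat.le_add_right D k)
    (B.iterate_mem_V a b hmap hz k)

lemma lamInv_sub_mem_V (hs1 : 1 ≤ s) {x : A} {m D : ℕ} {β : Bool}
    (hmap : ∀ D' z', z' ∈ B.Vgr a b m β D' → B.star x z' ∈ B.Vgr a b m β (D' + 1))
    {z : A} (hz0 : B.star x z ∈ B.Vgr a b m β (D + 1)) :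
    B.lamInv s x z - z ∈ B.Vgr a b m β (D + 1) := by
  obtain ⟨n, rfl⟩ : ∃ n, s = n + 1 := ⟨s - 1, by omega⟩
  unfold LeftBrace.lamInv
  rw [Finset.sum_range_succ']
  simp only [pow_zero, one_smul, Function.iterate_zero_apply, add_sub_cancel_right]
  apply AddSubgroup.sum_mem
  intro k _
  refine AddSubgroup.zsmul_mem _ ?_ _
  rw [Function.iterate_succ_apply]
  have := B.iterate_mem_V a b hmap hz0 k
  exact B.Vgr_mono a b le_rfl (fun h => h) (by omega) this

lemma iterate_mem_W {x : A} {k : ℕ} {γ : Bool}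
    (hmap : ∀ z', z' ∈ B.Wgr a b c k γ → B.star x z' ∈ B.Wgr a b c k γ)
    {z : A} (hz : z ∈ B.Wgr a b c k γ) (n : ℕ) :
    (B.star x)^[n] z ∈ B.Wgr a b c k γ := by
  induction n with
  | zero => simpa using hz
  | succ n ih => rw [Function.iterate_succ_apply']; exact hmap _ ih

lemma lamInv_mem_W {x : A} {k : ℕ} {γ : Bool}
    (hmap : ∀ z', z' ∈ B.Wgr a b c k γ → B.star x z' ∈ B.Wgr a b c k γ)
    {z : A} (hz : z ∈ B.Wgr a b c k γ) :
    B.lamInv s x z ∈ B.Wgr a b c k γ := by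
  apply AddSubgroup.sum_mem
  intro n _
  exact AddSubgroup.zsmul_mem _ (B.iterate_mem_W a b c hmap hz n) _

/-- lossy star-map for a literal word, W-side -/
lemma word_star_W_lossy {u : A} {na nb : ℕ} (hw : BraceWord B a b c u na nb false)
    {k : ℕ} {γ : Bool} {z : A} (hz : z ∈ B.Wgr a b c k γ) :
    B.star u z ∈ B.Wgr a b c k γ := by
  have := B.word_star_W a b c hw (β' := γ) (fun h => Or.inl h) hz
  exact B.Wgr_mono a b c (by omega) (fun h => h) this

/-- lossy star-map for a literal word, V-side (depth bump) -/
lemma word_star_V_lossy {u : A} {na nb du : ℕ} (hw : WordD B a b u na nb du)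
    {m d : ℕ} {β : Bool} {z : A} (hz : z ∈ B.Vgr a b m β d) :
    B.star u z ∈ B.Vgr a b m β (d + 1) := by
  have := B.word_star_V a b hw (β' := β) (fun h => Or.inl h) hz
  exact B.Vgr_mono a b (by omega) (fun h => h) le_rfl this

variable (hs : B.leftChain s = ⊥)
include hs

lemma inv_star_W {u : A} {na nb : ℕ} (hw : BraceWord B a b c u na nb false)
    {k : ℕ} {γ : Bool} {z : A} (hz : z ∈ B.Wgr a b c k γ) :
    B.star (B.inv u) z ∈ B.Wgr a b c k γ := by
  rw [B.star_inv_eq hs]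
  exact AddSubgroup.neg_mem _ (B.lamInv_mem_W a b c
    (fun z' hz' => B.word_star_W_lossy a b c hw hz')
    (B.word_star_W_lossy a b c hw hz))

lemma inv_star_V {u : A} {na nb du : ℕ} (hw : WordD B a b u na nb du)
    {m d : ℕ} {β : Bool} {z : A} (hz : z ∈ B.Vgr a b m β d) :
    B.star (B.inv u) z ∈ B.Vgr a b m β (d + 1) := by
  rw [B.star_inv_eq hs]
  exact AddSubgroup.neg_mem _ (B.lamInv_mem_V a b
    (fun D' z' hz' => B.word_star_V_lossy a b hw hz')
    (B.word_star_V_lossy a b hw hz))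

end Maps
end LeftBrace

namespace LeftBrace
variable {A : Type*} [AddCommGroup A] (B : LeftBrace A) (a b c : A)

/-- the three properties of the main lemma -/
def Props (m : ℕ) (β : Bool) (x : A) : Prop :=
  (∀ k : ℕ, ∀ γ : Bool, ∀ z : A, z ∈ B.Wgr a b c k γ → B.star x z ∈ B.Wgr a b c k γ) ∧
  (∀ m' : ℕ, ∀ β' : Bool, ∀ d' : ℕ, ∀ z : A,
    z ∈ B.Vgr a b m' β' d' → B.star x z ∈ B.Vgr a b m' β' (d' + 1)) ∧
  B.star x c ∈ B.Wgr a b c m β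

lemma props_zero (m : ℕ) (β : Bool) : B.Props a b c m β 0 := by
  refine ⟨?_, ?_, ?_⟩
  · intro k γ z _; rw [B.zero_star]; exact AddSubgroup.zero_mem _
  · intro m' β' d' z _; rw [B.zero_star]; exact AddSubgroup.zero_mem _
  · rw [B.zero_star]; exact AddSubgroup.zero_mem _

lemma props_peel {m : ℕ} {β : Bool} {H u : A}
    (hH : B.Props a b c m β H) (hu : B.Props a b c m β u) :
    B.Props a b c m β (B.circ H u) := by
  obtain ⟨hHa, hHb, hHc⟩ := hH
  obtain ⟨hua, hub, huc⟩ := hu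
  refine ⟨?_, ?_, ?_⟩
  · intro k γ z hz
    rw [B.star3]
    exact AddSubgroup.add_mem _ (AddSubgroup.add_mem _ (hHa _ _ _ (hua _ _ _ hz))
      (hHa _ _ _ hz)) (hua _ _ _ hz)
  · intro m' β' d' z hz
    rw [B.star3]
    refine AddSubgroup.add_mem _ (AddSubgroup.add_mem _ ?_ (hHb _ _ _ _ hz)) (hub _ _ _ _ hz)
    have := hHb _ _ _ _ (hub _ _ _ _ hz)
    exact B.Vgr_mono a b le_rfl (fun h => h) (by omega) this
  · rw [B.star3]
    exact AddSubgroup.add_mem _ (AddSubgroup.add_mem _ (hHa _ _ _ huc) hHc) huc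

theorem goodsum {s : ℕ} (hs : B.leftChain s = ⊥) (hs1 : 1 ≤ s) :
    ∀ t d m β x, s ≤ d + t → x ∈ B.Vgr a b m β d → B.Props a b c m β x := by
  intro t
  induction t with
  | zero =>
    intro d m β x hd hx
    have hx0 : x = 0 := by
      have := B.Vgr_le_chain a b m β d hx
      have := B.chain_anti hd this
      rw [hs] at this
      simpa using this
    rw [hx0]; exact B.props_zero a b c m β
  | succ t IH =>
    intro d m β x hd hx
    obtain ⟨l, hl, hsum⟩ := exists_list_sum (S := B.okV a b m β d) hx
    suffices H : ∀ (l' : List A), (∀ y ∈ l', y ∈ B.okV a b m β d ∨ -y ∈ B.okV a b m β d) →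
        ∀ y₀, y₀ ∈ B.Vgr a b m β (d + 1) → B.Props a b c m β (l'.sum + y₀) by
      have := H l hl 0 (AddSubgroup.zero_mem _)
      rw [add_zero, hsum] at this
      exact this
    intro l'
    induction l' with
    | nil =>
      intro _ y₀ hy₀
      rw [List.sum_nil, zero_add]
      exact IH (d + 1) m β y₀ (by omega) hy₀
    | cons h0 tl ihl =>
      intro hl' y₀ hy₀
      have htl : ∀ y ∈ tl, y ∈ B.okV a b m β d ∨ -y ∈ B.okV a b m β d :=
        fun y hy => hl' y (List.mem_cons_of_mem _ hy)
      set rest := tl.sum + y₀ with hrest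
      have hrest_mem : rest ∈ B.Vgr a b m β d := by
        apply AddSubgroup.add_mem
        · apply AddSubgroup.list_sum_mem
          intro y hy
          rcases htl y hy with h | h
          · exact AddSubgroup.subset_closure h
          · have := AddSubgroup.neg_mem _ (AddSubgroup.subset_closure h)
            rwa [neg_neg] at this
        · exact B.Vgr_mono a b le_rfl (fun h => h) (Nat.le_succ d) hy₀
      have hgoal_eq : (h0 :: tl).sum + y₀ = h0 + rest := by
        rw [List.sum_cons, hrest]; abel
      rw [hgoal_eq]
      rcases hl' h0 List.mem_cons_self with hpos | hneg
      · -- positive head: h0 = w a word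
        obtain ⟨na, nb, dd, hw, hm, hβ, hdd⟩ := hpos
        -- head properties
        have hHa : ∀ k γ z, z ∈ B.Wgr a b c k γ → B.star h0 z ∈ B.Wgr a b c k γ :=
          fun k γ z hz => B.word_star_W_lossy a b c (B.wordD_toBrace a b c hw) hz
        have hHb : ∀ m' β' d' z, z ∈ B.Vgr a b m' β' d' → B.star h0 z ∈ B.Vgr a b m' β' (d'+1) :=
          fun m' β' d' z hz => B.word_star_V_lossy a b hw hz
        have hHc : B.star h0 c ∈ B.Wgr a b c m β := by
          refine AddSubgroup.subset_closure ⟨na + 0, nb + 0,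
            BraceWord.node (B.wordD_toBrace a b c hw) BraceWord.base_c, by omega, ?_⟩
          intro h; have := hβ h; omega
        -- the complement
        set u := B.lamInv s h0 rest with hu_def
        have hΔ : u - rest ∈ B.Vgr a b m β (d + 1) :=
          B.lamInv_sub_mem_V a b hs1
            (fun D' z' hz' => B.word_star_V_lossy a b hw hz')
            (B.word_star_V_lossy a b hw hrest_mem)
        have hu_eq : u = tl.sum + (y₀ + (u - rest)) := by rw [hrest]; abel
        have hu_props : B.Props a b c m β u := by
          rw [hu_eq]
          exact ihl htl (y₀ + (u - rest)) (AddSubgroup.add_mem _ hy₀ hΔ)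
        have hcirc : B.circ h0 u = h0 + rest := B.circ_lamInv hs h0 rest
        rw [← hcirc]
        exact B.props_peel a b c ⟨hHa, hHb, hHc⟩ hu_props
      · -- negative head: h0 = -w
        set w := -h0 with hw_def
        obtain ⟨na, nb, dd, hw, hm, hβ, hdd⟩ := hneg
        have hw_mem : w ∈ B.Vgr a b m β d :=
          AddSubgroup.subset_closure ⟨na, nb, dd, hw, hm, hβ, hdd⟩
        have hinvw_mem : B.inv w ∈ B.Vgr a b m β d := by
          rw [B.inv_eq_neg_lamInv hs]
          exact AddSubgroup.neg_mem _ (B.lamInv_mem_V a b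
            (fun D' z' hz' => B.word_star_V_lossy a b hw hz') hw_mem)
        -- head properties for H = inv w
        have hHa : ∀ k γ z, z ∈ B.Wgr a b c k γ → B.star (B.inv w) z ∈ B.Wgr a b c k γ :=
          fun k γ z hz => B.inv_star_W a b c hs (B.wordD_toBrace a b c hw) hz
        have hHb : ∀ m' β' d' z, z ∈ B.Vgr a b m' β' d' →
            B.star (B.inv w) z ∈ B.Vgr a b m' β' (d'+1) :=
          fun m' β' d' z hz => B.inv_star_V a b hs hw hz
        have hwc : B.star w c ∈ B.Wgr a b c m β := by
          refine AddSubgroup.subset_closure ⟨na + 0, nb + 0,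
            BraceWord.node (B.wordD_toBrace a b c hw) BraceWord.base_c, by omega, ?_⟩
          intro h; have := hβ h; omega
        have hHc : B.star (B.inv w) c ∈ B.Wgr a b c m β := by
          rw [B.star_inv_eq hs]
          exact AddSubgroup.neg_mem _ (B.lamInv_mem_W a b c
            (fun z' hz' => B.word_star_W_lossy a b c (B.wordD_toBrace a b c hw) hz') hwc)
        -- the shifted remainder
        have hstarwinv : B.star w (B.inv w) ∈ B.Vgr a b m β (d + 1) := by
          have := B.word_star_V a b hw (β' := β) (fun h => Or.inl h) hinvw_mem
          exact B.Vgr_mono a b (by omega) (fun h => h) le_rfl this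
        set ζ := B.star w (B.inv w) + rest with hζ_def
        have hζ_mem : ζ ∈ B.Vgr a b m β d :=
          AddSubgroup.add_mem _
            (B.Vgr_mono a b le_rfl (fun h => h) (Nat.le_succ d) hstarwinv) hrest_mem
        set u := B.lamInv s (B.inv w) ζ with hu_def
        have hΔ0 : u - ζ ∈ B.Vgr a b m β (d + 1) :=
          B.lamInv_sub_mem_V a b hs1
            (fun D' z' hz' => B.inv_star_V a b hs hw hz')
            (B.inv_star_V a b hs hw hζ_mem)
        have hΔ : u - rest ∈ B.Vgr a b m β (d + 1) := by
          have : u - rest = (u - ζ) + B.star w (B.inv w) := by rw [hζ_def]; abel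
          rw [this]
          exact AddSubgroup.add_mem _ hΔ0 hstarwinv
        have hu_eq : u = tl.sum + (y₀ + (u - rest)) := by rw [hrest]; abel
        have hu_props : B.Props a b c m β u := by
          rw [hu_eq]
          exact ihl htl (y₀ + (u - rest)) (AddSubgroup.add_mem _ hy₀ hΔ)
        have hneg_eq : B.inv w + B.star w (B.inv w) = -w := by
          have h1 : B.circ w (B.inv w) = 0 := by rw [B.circ_inv_right, B.one_eq_zero]
          have h2 := B.circ_eq w (B.inv w)
          rw [h1] at h2
          have h3 : w + (B.inv w + B.star w (B.inv w)) = 0 := by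
            rw [show w + (B.inv w + B.star w (B.inv w))
              = w + B.inv w + B.star w (B.inv w) from by abel, ← h2]
          exact eq_neg_of_add_eq_zero_right h3
        have hcirc : B.circ (B.inv w) u = h0 + rest := by
          rw [B.circ_lamInv hs, hζ_def]
          rw [show B.inv w + (B.star w (B.inv w) + rest)
            = (B.inv w + B.star w (B.inv w)) + rest from by abel, hneg_eq, hw_def]
          rw [neg_neg]
        rw [← hcirc]
        exact B.props_peel a b c ⟨hHa, hHb, hHc⟩ hu_props

end LeftBrace

theorem statement1 {A : Type*} [AddCommGroup A] (B : LeftBrace A) (s : ℕ)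
    (hs : B.leftChain s = ⊥) (a b c : A) :
    B.star a (B.star b c) - B.star (B.star a b) c
      - B.star b (B.star a c) + B.star (B.star b a) c
    ∈ AddSubgroup.closure
        {w : A | ∃ na nb : ℕ, BraceWord B a b c w na nb true ∧
          3 ≤ na + nb ∧ 1 ≤ na ∧ 1 ≤ nb} := by
  by_cases htriv : (⊤ : AddSubgroup A) = ⊥
  · have hzero : ∀ x : A, x = 0 := by
      intro x
      have hx : x ∈ (⊤ : AddSubgroup A) := AddSubgroup.mem_top x
      rw [htriv] at hx
      simpa using hx
    rw [hzero (B.star a (B.star b c) - B.star (B.star a b) c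
      - B.star b (B.star a c) + B.star (B.star b a) c)]
    exact AddSubgroup.zero_mem _
  · have hs1 : 1 ≤ s := by
      rcases Nat.eq_zero_or_pos s with h | h
      · exfalso; apply htriv; rw [h] at hs; exact hs
      · exact h
    -- reduce to membership in Wgr 3 true
    suffices hW : B.star a (B.star b c) - B.star (B.star a b) c
        - B.star b (B.star a c) + B.star (B.star b a) c ∈ B.Wgr a b c 3 true by
      have hle : B.Wgr a b c 3 true ≤ AddSubgroup.closure {w : A | ∃ na nb : ℕ,
          BraceWord B a b c w na nb true ∧ 3 ≤ na + nb ∧ 1 ≤ na ∧ 1 ≤ nb} := by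
        apply AddSubgroup.closure_le _ |>.2
        rintro w ⟨na, nb, hw, h1, h2⟩
        exact AddSubgroup.subset_closure ⟨na, nb, hw, h1, (h2 rfl).1, (h2 rfl).2⟩
      exact hle hW
    -- word certificates
    have hwa : WordD B a b a 1 0 1 := WordD.wa
    have hwb : WordD B a b b 0 1 1 := WordD.wb
    have hwp : WordD B a b (B.star a b) (1+0) (0+1) (1+1) := WordD.node hwa hwb
    have hwq : WordD B a b (B.star b a) (0+1) (1+0) (1+1) := WordD.node hwb hwa
    have hp_mem : B.star a b ∈ B.Vgr a b 2 true 2 :=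
      AddSubgroup.subset_closure ⟨_, _, _, hwp, by omega, fun _ => ⟨by omega, by omega⟩, by omega⟩
    have hq_mem : B.star b a ∈ B.Vgr a b 2 true 2 :=
      AddSubgroup.subset_closure ⟨_, _, _, hwq, by omega, fun _ => ⟨by omega, by omega⟩, by omega⟩
    have hnegq_mem : -(B.star b a) ∈ B.Vgr a b 2 true 2 := AddSubgroup.neg_mem _ hq_mem
    have hpq_mem : B.star a b - B.star b a ∈ B.Vgr a b 2 true 2 :=
      AddSubgroup.sub_mem _ hp_mem hq_mem
    -- literal lossy maps
    have mapa : ∀ m β D' z', z' ∈ B.Vgr a b m β D' → B.star a z' ∈ B.Vgr a b m β (D'+1) :=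
      fun m β D' z' hz' => B.word_star_V_lossy a b hwa hz'
    have mapb : ∀ m β D' z', z' ∈ B.Vgr a b m β D' → B.star b z' ∈ B.Vgr a b m β (D'+1) :=
      fun m β D' z' hz' => B.word_star_V_lossy a b hwb hz'
    have mapp : ∀ m β D' z', z' ∈ B.Vgr a b m β D' →
        B.star (B.star a b) z' ∈ B.Vgr a b m β (D'+1) :=
      fun m β D' z' hz' => B.word_star_V_lossy a b hwp hz'
    -- the elements
    set ζb := B.lamInv s b (B.star a b - B.star b a) with hζbdef
    set r := B.lamInv s a ζb with hrdef
    set u₁ := B.lamInv s (B.star a b) (r - B.star a b) with hu₁def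
    set u₂ := B.lamInv s (-(B.star b a)) (u₁ + B.star b a) with hu₂def
    -- memberships
    have hζb_mem : ζb ∈ B.Vgr a b 2 true 2 := by
      rw [hζbdef]; exact B.lamInv_mem_V a b (mapb 2 true) hpq_mem
    have hr_mem : r ∈ B.Vgr a b 2 true 2 := by
      rw [hrdef]; exact B.lamInv_mem_V a b (mapa 2 true) hζb_mem
    have hrest₁_mem : r - B.star a b ∈ B.Vgr a b 2 true 2 :=
      AddSubgroup.sub_mem _ hr_mem hp_mem
    have hu₁_mem : u₁ ∈ B.Vgr a b 2 true 2 := by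
      rw [hu₁def]; exact B.lamInv_mem_V a b (mapp 2 true) hrest₁_mem
    have t1 : ζb - (B.star a b - B.star b a) ∈ B.Vgr a b 3 true 3 := by
      rw [hζbdef]
      exact B.lamInv_sub_mem_V a b hs1 (mapb 3 true)
        (B.word_star_V a b hwb (β' := true) (fun _ => Or.inl rfl) hpq_mem)
    have t2 : r - ζb ∈ B.Vgr a b 3 true 3 := by
      rw [hrdef]
      exact B.lamInv_sub_mem_V a b hs1 (mapa 3 true)
        (B.word_star_V a b hwa (β' := true) (fun _ => Or.inl rfl) hζb_mem)
    have hD₃ : r - (B.star a b - B.star b a) ∈ B.Vgr a b 3 true 3 := by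
      have h := AddSubgroup.add_mem _ t2 t1
      rwa [sub_add_sub_cancel] at h
    have hΔp : u₁ - (r - B.star a b) ∈ B.Vgr a b 3 true 3 := by
      rw [hu₁def]
      refine B.lamInv_sub_mem_V a b hs1 (mapp 3 true) ?_
      have := B.word_star_V a b hwp (β' := true) (fun _ => Or.inl rfl) hrest₁_mem
      exact B.Vgr_mono a b (by omega) (fun h => h) le_rfl this
    have hD₄_mem : u₁ + B.star b a ∈ B.Vgr a b 3 true 3 := by
      have h := AddSubgroup.add_mem _ hD₃ hΔp
      rwa [show (r - (B.star a b - B.star b a)) + (u₁ - (r - B.star a b))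
        = u₁ + B.star b a from by abel] at h
    -- Props of -q
    have Pnegq := B.goodsum a b c hs hs1 s 2 2 true (-(B.star b a)) (by omega) hnegq_mem
    have hu₂_mem : u₂ ∈ B.Vgr a b 3 true 3 := by
      rw [hu₂def]
      exact B.lamInv_mem_V a b (fun D' z' hz' => Pnegq.2.1 3 true D' z' hz') hD₄_mem
    -- Phi memberships via goodsum
    have hΦr : B.star r c ∈ B.Wgr a b c 2 true :=
      (B.goodsum a b c hs hs1 s 2 2 true r (by omega) hr_mem).2.2
    have hΦu₁ : B.star u₁ c ∈ B.Wgr a b c 2 true :=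
      (B.goodsum a b c hs hs1 s 2 2 true u₁ (by omega) hu₁_mem).2.2
    have hΦu₂ : B.star u₂ c ∈ B.Wgr a b c 3 true :=
      (B.goodsum a b c hs hs1 s 3 3 true u₂ (by omega) hu₂_mem).2.2
    -- gq' and its Props
    have hgq'_mem : -(B.star (B.star b a) (B.star b a)) ∈ B.Vgr a b 4 true 3 :=
      AddSubgroup.neg_mem _ (AddSubgroup.subset_closure
        ⟨_, _, _, WordD.node hwq hwq, by omega, fun _ => ⟨by omega, by omega⟩, by omega⟩)
    have Pgq := B.goodsum a b c hs hs1 s 3 4 true (-(B.star (B.star b a) (B.star b a)))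
      (by omega) hgq'_mem
    -- identities
    have hζb_circ : B.circ b ζb = b + (B.star a b - B.star b a) := by
      rw [hζbdef]; exact B.circ_lamInv hs b _
    have hra : B.circ a r = a + ζb := by
      rw [hrdef]; exact B.circ_lamInv hs a _
    have hstep1 : B.circ (B.circ b a) r = B.circ a b := by
      rw [B.circ_assoc, hra, B.circ_add, hζb_circ, B.circ_eq b a, B.circ_eq a b]
      abel
    have eq1 : (B.star b (B.star a (B.star r c)) + B.star b (B.star r c)
          + B.star a (B.star r c))
        + (B.star b (B.star a c) + B.star b c + B.star a c) + B.star r c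
        = B.star a (B.star b c) + B.star a c + B.star b c := by
      rw [← B.star3 b a (B.star r c), ← B.star3 b a c, ← B.star3 (B.circ b a) r c,
        ← B.star3 a b c, hstep1]
    have hcircp : B.circ (B.star a b) u₁ = r := by
      rw [hu₁def, B.circ_lamInv hs]; abel
    have eq2 : B.star r c = B.star (B.star a b) (B.star u₁ c) + B.star (B.star a b) c
        + B.star u₁ c := by
      rw [← hcircp, B.star3]
    have hcircnq : B.circ (-(B.star b a)) u₂ = u₁ := by
      rw [hu₂def, B.circ_lamInv hs]; abel
    have eq3 : B.star u₁ c = B.star (-(B.star b a)) (B.star u₂ c)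
        + B.star (-(B.star b a)) c + B.star u₂ c := by
      rw [← hcircnq, B.star3]
    have hcircqi : B.circ (B.inv (B.star b a)) (-(B.star (B.star b a) (B.star b a)))
        = -(B.star b a) := by
      apply B.circ_left_cancel (B.star b a)
      rw [← B.circ_assoc, B.circ_inv_right, B.one_eq_zero, B.zero_circ, B.circ_neg,
        B.circ_eq (B.star b a) (B.star b a), two_nsmul]
      abel
    have eq4 : B.star (-(B.star b a)) c
        = B.star (B.inv (B.star b a)) (B.star (-(B.star (B.star b a) (B.star b a))) c)
        + B.star (B.inv (B.star b a)) c
        + B.star (-(B.star (B.star b a) (B.star b a))) c := by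
      rw [← hcircqi, B.star3]
    have eq5 : (0 : A) = B.star (B.inv (B.star b a)) (B.star (B.star b a) c)
        + B.star (B.inv (B.star b a)) c + B.star (B.star b a) c := by
      have h := B.star3 (B.inv (B.star b a)) (B.star b a) c
      rw [B.inv_circ, B.one_eq_zero, B.zero_star] at h
      exact h
    -- the final equality
    have comb : (B.star a (B.star b c) - B.star (B.star a b) c
          - B.star b (B.star a c) + B.star (B.star b a) c)
        - (B.star b (B.star a (B.star r c)) + B.star b (B.star r c)
          + B.star a (B.star r c)
          + B.star (B.star a b) (B.star u₁ c)
          + B.star (-(B.star b a)) (B.star u₂ c)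
          + B.star u₂ c
          + B.star (B.inv (B.star b a)) (B.star (-(B.star (B.star b a) (B.star b a))) c)
          + B.star (-(B.star (B.star b a) (B.star b a))) c
          - B.star (B.inv (B.star b a)) (B.star (B.star b a) c))
        = -(((B.star b (B.star a (B.star r c)) + B.star b (B.star r c)
          + B.star a (B.star r c))
        + (B.star b (B.star a c) + B.star b c + B.star a c) + B.star r c)
        - (B.star a (B.star b c) + B.star a c + B.star b c))
        + ((B.star r c) - (B.star (B.star a b) (B.star u₁ c) + B.star (B.star a b) c
        + B.star u₁ c))
        + ((B.star u₁ c) - (B.star (-(B.star b a)) (B.star u₂ c)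
        + B.star (-(B.star b a)) c + B.star u₂ c))
        + ((B.star (-(B.star b a)) c)
        - (B.star (B.inv (B.star b a)) (B.star (-(B.star (B.star b a) (B.star b a))) c)
        + B.star (B.inv (B.star b a)) c
        + B.star (-(B.star (B.star b a) (B.star b a))) c))
        - ((0 : A) - (B.star (B.inv (B.star b a)) (B.star (B.star b a) c)
        + B.star (B.inv (B.star b a)) c + B.star (B.star b a) c)) := by
      abel
    rw [sub_eq_zero_of_eq eq1, sub_eq_zero_of_eq eq2, sub_eq_zero_of_eq eq3,
      sub_eq_zero_of_eq eq4, sub_eq_zero_of_eq eq5] at comb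
    simp only [neg_zero, add_zero, zero_add, sub_zero, zero_sub, neg_neg] at comb
    rw [sub_eq_zero.mp comb]
    -- memberships of all nine terms
    have hW3' : B.star a (B.star r c) ∈ B.Wgr a b c 3 true :=
      B.word_star_W a b c BraceWord.base_a (β' := true) (fun _ => Or.inl rfl) hΦr
    have hW2' : B.star b (B.star r c) ∈ B.Wgr a b c 3 true :=
      B.word_star_W a b c BraceWord.base_b (β' := true) (fun _ => Or.inl rfl) hΦr
    have hW1' : B.star b (B.star a (B.star r c)) ∈ B.Wgr a b c 3 true := by
      have := B.word_star_W a b c BraceWord.base_b (β' := true) (fun _ => Or.inl rfl) hW3'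
      exact B.Wgr_mono a b c (by omega) (fun h => h) this
    have hP1 : B.star (B.star a b) (B.star u₁ c) ∈ B.Wgr a b c 3 true := by
      have := B.word_star_W a b c (B.wordD_toBrace a b c hwp) (β' := true)
        (fun _ => Or.inl rfl) hΦu₁
      exact B.Wgr_mono a b c (by omega) (fun h => h) this
    have hQ1 : B.star (-(B.star b a)) (B.star u₂ c) ∈ B.Wgr a b c 3 true :=
      Pnegq.1 3 true _ hΦu₂
    have hR2 : B.star (-(B.star (B.star b a) (B.star b a))) c ∈ B.Wgr a b c 3 true :=
      B.Wgr_mono a b c (by omega) (fun h => h) Pgq.2.2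
    have hR1 : B.star (B.inv (B.star b a))
        (B.star (-(B.star (B.star b a) (B.star b a))) c) ∈ B.Wgr a b c 3 true :=
      B.inv_star_W a b c hs (B.wordD_toBrace a b c hwq) hR2
    have hq_c : B.star (B.star b a) c ∈ B.Wgr a b c 2 true :=
      AddSubgroup.subset_closure ⟨_, _,
        BraceWord.node (B.wordD_toBrace a b c hwq) BraceWord.base_c, by omega,
        fun _ => ⟨by omega, by omega⟩⟩
    have hqq_c : B.star (B.star b a) (B.star (B.star b a) c)
        ∈ B.Wgr a b c (2 + (0+1) + (1+0)) true :=
      B.word_star_W a b c (B.wordD_toBrace a b c hwq) (β' := true)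
        (fun _ => Or.inl rfl) hq_c
    have hSqiQ : B.star (B.inv (B.star b a)) (B.star (B.star b a) c)
        ∈ B.Wgr a b c 3 true := by
      rw [B.star_inv_eq hs]
      have h4 := B.lamInv_mem_W (s := s) a b c
        (fun z' hz' => B.word_star_W_lossy a b c (B.wordD_toBrace a b c hwq) hz') hqq_c
      exact AddSubgroup.neg_mem _ (B.Wgr_mono a b c (by omega) (fun h => h) h4)
    refine AddSubgroup.sub_mem _ ?_ hSqiQ
    exact AddSubgroup.add_mem _ (AddSubgroup.add_mem _ (AddSubgroup.add_mem _
      (AddSubgroup.add_mem _ (AddSubgroup.add_mem _ (AddSubgroup.add_mem _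
      (AddSubgroup.add_mem _ hW1' hW2') hW3') hP1) hQ1) hΦu₂) hR1) hR2
end

section
/- Let (A, +, ·) be a nilpotent pre-Lie algebra over a field F of characteristic zero. For a ∈ A let L_a: A → A be left multiplication L_a(b) = a·b, and define W: A → A by W(a) = Σ_{k≥1} (1/k!) · L_a^{k−1}(a) = a + (1/2!)·a·a + (1/3!)·a·(a·a) + ⋯ (a finite sum by nilpotency). Then W is a bijection from A to A. -/
open Filter Topology

/-- A pre-Lie algebra over a field `F`: an `F`-vector space with a bilinear
product satisfying `(x·y)·z − x·(y·z) = (y·x)·z − y·(x·z)`. -/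
structure PreLieAlg (F : Type*) (A : Type*) [Field F] [AddCommGroup A] [Module F A] where
  mul : A → A → A
  mul_add : ∀ a b c : A, mul a (b + c) = mul a b + mul a c
  add_mul : ∀ a b c : A, mul (a + b) c = mul a c + mul b c
  smul_mul : ∀ (e : F) (a b : A), mul (e • a) b = e • mul a b
  mul_smul : ∀ (e : F) (a b : A), mul a (e • b) = e • mul a b
  pre_lie : ∀ a b c : A,
    mul (mul a b) c - mul a (mul b c) = mul (mul b a) c - mul b (mul a c)

/-- `P.IsProd x n` : `x` is a product of `n` elements of `A`, with any
distribution of brackets. -/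
inductive PreLieAlg.IsProd {F A : Type*} [Field F] [AddCommGroup A] [Module F A]
    (P : PreLieAlg F A) : A → ℕ → Prop
  | single (a : A) : PreLieAlg.IsProd P a 1
  | node {u v : A} {n m : ℕ} : PreLieAlg.IsProd P u n → PreLieAlg.IsProd P v m →
      PreLieAlg.IsProd P (P.mul u v) (n + m)

/-- `A` is nilpotent of index `n` (`0 < n`): every product of `n` elements
(with any distribution of brackets) is zero. -/
def PreLieAlg.IsNilpotentOf {F A : Type*} [Field F] [AddCommGroup A] [Module F A]
    (P : PreLieAlg F A) (n : ℕ) : Prop :=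
  0 < n ∧ ∀ x : A, P.IsProd x n → x = 0

/-- `e^{L_x}(b) = Σ_{k ≥ 0} (1/k!) • L_x^k(b)`; under nilpotency of index `n`
all terms with `k ≥ n - 1` vanish, so the series equals this truncated sum. -/
def PreLieAlg.expL {F A : Type*} [Field F] [AddCommGroup A] [Module F A]
    (P : PreLieAlg F A) (n : ℕ) (x b : A) : A :=
  ∑ k ∈ Finset.range n, ((Nat.factorial k : F))⁻¹ • (P.mul x)^[k] b

/-- `W(a) = Σ_{k ≥ 1} (1/k!) • L_a^{k-1}(a)`; under nilpotency of index `n`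
all terms with `k ≥ n` vanish, so the series equals this truncated sum. -/
def PreLieAlg.W {F A : Type*} [Field F] [AddCommGroup A] [Module F A]
    (P : PreLieAlg F A) (n : ℕ) (a : A) : A :=
  ∑ k ∈ Finset.range n, ((Nat.factorial (k + 1) : F))⁻¹ • (P.mul a)^[k] a

/-- The group-of-flows multiplication `a ∘ b = a + e^{L_{Ω(a)}}(b)`. -/
def PreLieAlg.flow {F A : Type*} [Field F] [AddCommGroup A] [Module F A]
    (P : PreLieAlg F A) (n : ℕ) (Ω : A → A) (a b : A) : A :=
  a + P.expL n (Ω a) b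

/-- `a * b = a ∘ b - a - b` for the group-of-flows multiplication. -/
def PreLieAlg.flowStar {F A : Type*} [Field F] [AddCommGroup A] [Module F A]
    (P : PreLieAlg F A) (n : ℕ) (Ω : A → A) (a b : A) : A :=
  P.flow n Ω a b - a - b

namespace PreLieAlg

variable {F A : Type*} [Field F] [AddCommGroup A] [Module F A] (P : PreLieAlg F A)

/-- The multiplication as a bilinear map. -/
def bil : A →ₗ[F] A →ₗ[F] A :=
  LinearMap.mk₂ F P.mul P.add_mul P.smul_mul P.mul_add P.mul_smul

lemma mul_eq_bil (x y : A) : P.mul x y = P.bil x y := rfl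

/-- span of products of at least `k` elements. -/
def S (k : ℕ) : Submodule F A := Submodule.span F {x | ∃ m, k ≤ m ∧ P.IsProd x m}

lemma mem_S_one (a : A) : a ∈ P.S 1 :=
  Submodule.subset_span ⟨1, le_refl 1, .single a⟩

lemma S_anti {k l : ℕ} (h : k ≤ l) : P.S l ≤ P.S k :=
  Submodule.span_mono (fun x ⟨m, hm, hp⟩ => ⟨m, le_trans h hm, hp⟩)

lemma mul_mem_S {x y : A} {k l : ℕ} (hx : x ∈ P.S k) (hy : y ∈ P.S l) :
    P.mul x y ∈ P.S (k + l) := by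
  have hle : Submodule.map₂ P.bil (P.S k) (P.S l) ≤ P.S (k + l) := by
    rw [S, S, Submodule.map₂_span_span]
    apply Submodule.span_le.2
    rintro z ⟨x', hx', y', hy', rfl⟩
    obtain ⟨m, hm, hpx⟩ := hx'
    obtain ⟨m', hm', hpy⟩ := hy'
    exact Submodule.subset_span ⟨m + m', add_le_add hm hm', .node hpx hpy⟩
  exact hle (Submodule.apply_mem_map₂ P.bil hx hy)

lemma isProd_pos {x : A} {m : ℕ} (h : P.IsProd x m) : 1 ≤ m := by
  induction h with
  | single a => omega
  | node hu hv ihu ihv => omega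

lemma isProd_trim {x : A} {m : ℕ} (h : P.IsProd x m) :
    ∀ k, 1 ≤ k → k ≤ m → P.IsProd x k := by
  induction h with
  | single a => intro k h1 h2; have : k = 1 := by omega
                subst this; exact .single a
  | @node u v n1 n2 hu hv ihu ihv =>
    intro k h1 h2
    rcases eq_or_lt_of_le h1 with h|h
    · exact h ▸ .single _
    · have hn1 := P.isProd_pos hu
      have hn2 := P.isProd_pos hv
      set k1 := min n1 (k - 1) with hk1def
      set k2 := k - k1 with hk2def
      have hk : k1 + k2 = k := by omega
      have h1' : P.IsProd u k1 := ihu k1 (by omega) (by omega)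
      have h2' : P.IsProd v k2 := ihv k2 (by omega) (by omega)
      exact hk ▸ .node h1' h2'

lemma eq_zero_of_mem_S {n : ℕ} (hn : P.IsNilpotentOf n) {z : A} (hz : z ∈ P.S n) :
    z = 0 := by
  have hle : P.S n ≤ ⊥ := by
    apply Submodule.span_le.2
    rintro x ⟨m, hm, hp⟩
    simpa using hn.2 x (P.isProd_trim hp n hn.1 hm)
  simpa using hle hz

lemma iter_mem {b x : A} {l : ℕ} (hb : b ∈ P.S l) (j : ℕ) :
    (P.mul x)^[j] b ∈ P.S (j + l) := by
  induction j with
  | zero => simpa using hb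
  | succ j ih =>
    rw [Function.iterate_succ_apply']
    have := P.mul_mem_S (P.mem_S_one x) ih
    exact P.S_anti (by omega) this

lemma iter_sub {x y b c : A} {k : ℕ} (hxy : x - y ∈ P.S k) (hbc : b - c ∈ P.S k)
    (j : ℕ) : (P.mul x)^[j] b - (P.mul y)^[j] c ∈ P.S (k + j) := by
  induction j with
  | zero => simpa using hbc
  | succ j ih =>
    rw [Function.iterate_succ_apply', Function.iterate_succ_apply']
    set B := (P.mul x)^[j] b
    set C := (P.mul y)^[j] c
    have key : P.mul x B - P.mul y C = P.mul (x - y) B + P.mul y (B - C) := by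
      simp only [mul_eq_bil, map_sub, LinearMap.sub_apply]
      abel
    rw [key]
    have hB : B ∈ P.S (j + 1) := P.iter_mem (P.mem_S_one b) j
    have h1 : P.mul (x - y) B ∈ P.S (k + (j + 1)) := P.mul_mem_S hxy hB
    have h2 : P.mul y (B - C) ∈ P.S (k + (j + 1)) :=
      P.S_anti (by omega) (P.mul_mem_S (P.mem_S_one y) ih)
    exact Submodule.add_mem _ h1 h2

lemma W_contract {n : ℕ} (hn : P.IsNilpotentOf n) {x y : A} {k : ℕ}
    (h : x - y ∈ P.S k) :
    (P.W n x - P.W n y) - (x - y) ∈ P.S (k + 1) := by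
  obtain ⟨m, rfl⟩ : ∃ m, n = m + 1 := ⟨n - 1, by have := hn.1; omega⟩
  have heq : (P.W (m + 1) x - P.W (m + 1) y) - (x - y) =
      ∑ j ∈ Finset.range m,
        ((Nat.factorial (j + 1 + 1) : F))⁻¹ •
          ((P.mul x)^[j + 1] x - (P.mul y)^[j + 1] y) := by
    simp only [W, Finset.sum_range_succ', Function.iterate_zero, id_eq,
      smul_sub, Finset.sum_sub_distrib]
    norm_num [Nat.factorial]
    abel
  rw [heq]
  apply Submodule.sum_mem
  intro j _
  apply Submodule.smul_mem
  exact P.S_anti (by omega) (P.iter_sub h h (j + 1))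

end PreLieAlg

theorem statement6 {F A : Type*} [Field F] [CharZero F] [AddCommGroup A] [Module F A]
    (P : PreLieAlg F A) (n : ℕ) (hn : P.IsNilpotentOf n) :
    Function.Bijective (P.W n) := by
  obtain ⟨m, hm⟩ : ∃ m, n = m + 1 := ⟨n - 1, by have := hn.1; omega⟩
  constructor
  · intro x y hxy
    have key : ∀ j, x - y ∈ P.S (1 + j) := by
      intro j
      induction j with
      | zero => exact Submodule.sub_mem _ (P.mem_S_one x) (P.mem_S_one y)
      | succ j ih =>
        have h2 := P.W_contract hn ih
        rw [hxy, sub_self, zero_sub] at h2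
        rw [← add_assoc]
        simpa using Submodule.neg_mem _ h2
    have hk := key (n - 1)
    have hxy0 : x - y ∈ P.S n := P.S_anti (by omega) hk
    exact sub_eq_zero.mp (P.eq_zero_of_mem_S hn hxy0)
  · intro b
    set f : A → A := fun a => a + b - P.W n a with hf
    have key : ∀ i, f^[i + 1] b - f^[i] b ∈ P.S (1 + i) := by
      intro i
      induction i with
      | zero => exact Submodule.sub_mem _ (P.mem_S_one _) (P.mem_S_one _)
      | succ i ih =>
        have heq : f^[i + 1 + 1] b - f^[i + 1] b =
            -((P.W n (f^[i + 1] b) - P.W n (f^[i] b)) - (f^[i + 1] b - f^[i] b)) := by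
          rw [Function.iterate_succ_apply' f (i + 1) b]
          simp only [Function.iterate_succ_apply' f i b,
            show ∀ a, f a = a + b - P.W n a from fun a => rfl]
          abel
        rw [heq]
        exact Submodule.neg_mem _ (P.W_contract hn ih)
    have hk := key m
    have hz : f^[m + 1] b - f^[m] b = 0 :=
      P.eq_zero_of_mem_S hn (P.S_anti (by omega) hk)
    refine ⟨f^[m] b, ?_⟩
    have h3 : f (f^[m] b) = f^[m] b := by
      have := sub_eq_zero.mp hz
      rwa [Function.iterate_succ_apply'] at this
    simp only [hf] at h3
    rw [sub_eq_iff_eq_add] at h3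
    exact (add_left_cancel h3).symm
end

section
/- Let (A, +, ·) be a nilpotent pre-Lie algebra over a field F of characteristic zero, let Ω: A → A be the inverse of the map W, define a∘b = a + e^{L_{Ω(a)}}(b) and a*b = a∘b − a − b. Then for all a, b ∈ A, the element a*b − a·b lies in the F-linear span of the set of all iterated ·-products (with any distribution of brackets) whose factors are copies of a and b, in which b appears exactly once and only as the last factor, and in which a appears at least two times. -/
open Filter Topology

/-- `MulWord P a b w m t` says `w` is an iterated `·`-product whose leaves are
`m` copies of `a` and, if `t = true`, a single copy of `b` as the rightmost
(final) leaf. -/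
inductive MulWord {F A : Type*} [Field F] [AddCommGroup A] [Module F A]
    (P : PreLieAlg F A) (a b : A) : A → ℕ → Bool → Prop
  | base_a : MulWord P a b a 1 false
  | base_b : MulWord P a b b 0 true
  | node {u v : A} {m₁ m₂ : ℕ} {t : Bool} :
      MulWord P a b u m₁ false → MulWord P a b v m₂ t →
      MulWord P a b (P.mul u v) (m₁ + m₂) t

section Aux

variable {F A : Type*} [Field F] [AddCommGroup A] [Module F A]

/-- The multiplication as a bilinear map. -/
def PreLieAlg.lmul (P : PreLieAlg F A) : A →ₗ[F] A →ₗ[F] A :=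
  LinearMap.mk₂ F P.mul P.add_mul P.smul_mul P.mul_add P.mul_smul

@[simp] lemma PreLieAlg.lmul_apply (P : PreLieAlg F A) (x y : A) :
    P.lmul x y = P.mul x y := rfl

/-- Span of words with at least `j` copies of `a`. -/
def Sp (P : PreLieAlg F A) (a b : A) (t : Bool) (j : ℕ) : Submodule F A :=
  Submodule.span F {w : A | ∃ m : ℕ, MulWord P a b w m t ∧ j ≤ m}

/-- Span of products of length at least `j`. -/
def Tp (P : PreLieAlg F A) (j : ℕ) : Submodule F A :=
  Submodule.span F {x : A | ∃ k : ℕ, j ≤ k ∧ P.IsProd x k}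

lemma Sp_mono (P : PreLieAlg F A) (a b : A) (t : Bool) {j k : ℕ} (h : j ≤ k) :
    Sp P a b t k ≤ Sp P a b t j :=
  Submodule.span_mono (fun w ⟨m, hw, hm⟩ => ⟨m, hw, le_trans h hm⟩)

lemma Tp_mono (P : PreLieAlg F A) {j k : ℕ} (h : j ≤ k) :
    Tp P k ≤ Tp P j :=
  Submodule.span_mono (fun w ⟨m, hm, hw⟩ => ⟨m, le_trans h hm, hw⟩)

lemma mem_Tp_one (P : PreLieAlg F A) (x : A) : x ∈ Tp P 1 :=
  Submodule.subset_span ⟨1, le_refl 1, .single x⟩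

lemma mul_mem_Sp (P : PreLieAlg F A) (a b : A) {t : Bool} {j k : ℕ} {x y : A}
    (hx : x ∈ Sp P a b false j) (hy : y ∈ Sp P a b t k) :
    P.mul x y ∈ Sp P a b t (j + k) := by
  have h := Submodule.apply_mem_map₂ (P.lmul) hx hy
  simp only [Sp, Tp] at h ⊢
  rw [Submodule.map₂_span_span] at h
  refine Submodule.span_mono ?_ h
  rintro _ ⟨u, ⟨m₁, hu, hj⟩, v, ⟨m₂, hv, hk⟩, rfl⟩
  exact ⟨m₁ + m₂, MulWord.node hu hv, by omega⟩

lemma mul_mem_Tp (P : PreLieAlg F A) {j k : ℕ} {x y : A}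
    (hx : x ∈ Tp P j) (hy : y ∈ Tp P k) :
    P.mul x y ∈ Tp P (j + k) := by
  have h := Submodule.apply_mem_map₂ (P.lmul) hx hy
  simp only [Sp, Tp] at h ⊢
  rw [Submodule.map₂_span_span] at h
  refine Submodule.span_mono ?_ h
  rintro _ ⟨u, ⟨m₁, hj, hu⟩, v, ⟨m₂, hk, hv⟩, rfl⟩
  exact ⟨m₁ + m₂, by omega, PreLieAlg.IsProd.node hu hv⟩

lemma MulWord.isProd {P : PreLieAlg F A} {a b w : A} {m : ℕ} {t : Bool}
    (h : MulWord P a b w m t) : P.IsProd w (m + t.toNat) := by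
  induction h with
  | base_a => exact .single a
  | base_b => exact .single b
  | node hu hv ihu ihv =>
      have := PreLieAlg.IsProd.node ihu ihv
      simpa [add_assoc] using this

lemma Sp_le_Tp (P : PreLieAlg F A) (a b : A) (j : ℕ) :
    Sp P a b false j ≤ Tp P j := by
  refine Submodule.span_mono ?_
  rintro w ⟨m, hw, hm⟩
  exact ⟨m, hm, by simpa using hw.isProd⟩

lemma PreLieAlg.IsProd.pos {P : PreLieAlg F A} {x : A} {k : ℕ}
    (h : P.IsProd x k) : 1 ≤ k := by
  induction h with
  | single => exact le_refl 1
  | node _ _ ih₁ ih₂ => omega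

lemma PreLieAlg.IsProd.shrink {P : PreLieAlg F A} {x : A} {k : ℕ}
    (h : P.IsProd x k) : ∀ j, 1 ≤ j → j ≤ k → P.IsProd x j := by
  induction h with
  | single c =>
      intro j h1 h2
      have : j = 1 := by omega
      subst this; exact .single c
  | @node u v p q hu hv ihu ihv =>
      intro j h1 h2
      rcases eq_or_lt_of_le h1 with h | h
      · exact h ▸ PreLieAlg.IsProd.single (P.mul u v)
      · have hp : 1 ≤ p := hu.pos
        have hq : 1 ≤ q := hv.pos
        have h₁ : 1 ≤ min p (j - 1) := by omega
        have h₂ : min p (j - 1) ≤ p := by omega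
        have h₃ : 1 ≤ j - min p (j - 1) := by omega
        have h₄ : j - min p (j - 1) ≤ q := by omega
        have := PreLieAlg.IsProd.node (ihu _ h₁ h₂) (ihv _ h₃ h₄)
        have he : min p (j - 1) + (j - min p (j - 1)) = j := by omega
        rwa [he] at this

lemma Tp_eq_bot (P : PreLieAlg F A) {n : ℕ} (hn : P.IsNilpotentOf n) :
    Tp P n = ⊥ := by
  rw [Tp, Submodule.span_eq_bot]
  rintro x ⟨k, hk, hx⟩
  exact hn.2 x (hx.shrink n hn.1 hk)

lemma iter_mem_Sp (P : PreLieAlg F A) (a b : A) {t : Bool} {c : ℕ} {x y : A}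
    (hx : x ∈ Sp P a b false 1) (hy : y ∈ Sp P a b t c) :
    ∀ k, (P.mul x)^[k] y ∈ Sp P a b t (k + c) := by
  intro k
  induction k with
  | zero => simpa using hy
  | succ k ih =>
      rw [Function.iterate_succ_apply']
      have := mul_mem_Sp P a b hx ih
      have he : 1 + (k + c) = (k + 1) + c := by omega
      rwa [he] at this

end Aux

theorem statement9 {F A : Type*} [Field F] [CharZero F] [AddCommGroup A] [Module F A]
    (P : PreLieAlg F A) (n : ℕ) (hn : P.IsNilpotentOf n)
    (Ω : A → A) (hΩ₁ : ∀ a, P.W n (Ω a) = a) (hΩ₂ : ∀ a, Ω (P.W n a) = a)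
    (a b : A) :
    P.flowStar n Ω a b - P.mul a b
      ∈ Submodule.span F {w : A | ∃ m : ℕ, MulWord P a b w m true ∧ 2 ≤ m} := by
  show P.flowStar n Ω a b - P.mul a b ∈ Sp P a b true 2
  obtain ⟨m, rfl⟩ : ∃ m, n = m + 1 := ⟨n - 1, by have := hn.1; omega⟩
  set x := Ω a with hxd
  have hW : P.W (m + 1) x = a := hΩ₁ a
  rw [PreLieAlg.W, Finset.sum_range_succ'] at hW
  simp only [zero_add, Nat.factorial_one, Nat.cast_one, inv_one, one_smul,
    Function.iterate_zero, id_eq] at hW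
  have hxa : x = a - ∑ k ∈ Finset.range m,
      ((Nat.factorial (k + 1 + 1) : F))⁻¹ • (P.mul x)^[k + 1] x := by
    rw [← hW]; abel
  have hb : b ∈ Sp P a b true 0 := Submodule.subset_span ⟨0, .base_b, le_refl 0⟩
  have ha : a ∈ Sp P a b false 1 := Submodule.subset_span ⟨1, .base_a, le_refl 1⟩
  have claim : ∀ j, 1 ≤ j → x ∈ Sp P a b false 1 ⊔ Tp P j := by
    intro j hj
    induction j, hj using Nat.le_induction with
    | base => exact Submodule.mem_sup_right (mem_Tp_one P x)
    | succ j hj ih =>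
        obtain ⟨u, hu, v, hv, huv⟩ := Submodule.mem_sup.mp ih
        have sub : ∀ k, (P.mul x)^[k] x ∈ Sp P a b false (k + 1) ⊔ Tp P (j + k) := by
          intro k
          induction k with
          | zero => simpa using ih
          | succ k ihk =>
              obtain ⟨s, hs, t', ht', hst⟩ := Submodule.mem_sup.mp ihk
              rw [Function.iterate_succ_apply', ← hst, ← huv]
              have e : P.mul (u + v) (s + t')
                  = P.mul u s + (P.mul u t' + P.mul v s + P.mul v t') := by
                simp only [← PreLieAlg.lmul_apply, map_add, LinearMap.add_apply]; abel
              rw [e]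
              refine Submodule.add_mem _ (Submodule.mem_sup_left ?_)
                (Submodule.mem_sup_right ?_)
              · have h1 := mul_mem_Sp P a b hu hs
                have he : 1 + (k + 1) = k + 1 + 1 := by omega
                rwa [he] at h1
              · refine Submodule.add_mem _ (Submodule.add_mem _ ?_ ?_) ?_
                · exact Tp_mono P (by omega) (mul_mem_Tp P (Sp_le_Tp P a b 1 hu) ht')
                · exact Tp_mono P (by omega) (mul_mem_Tp P hv (Sp_le_Tp P a b (k + 1) hs))
                · exact Tp_mono P (by omega) (mul_mem_Tp P hv ht')
        rw [hxa]
        refine Submodule.sub_mem _ (Submodule.mem_sup_left ha) (Submodule.sum_mem _ ?_)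
        intro k _
        refine Submodule.smul_mem _ _ ?_
        exact (sup_le_sup (Sp_mono P a b false (by omega)) (Tp_mono P (by omega)))
          (sub (k + 1))
  have hx1 : x ∈ Sp P a b false 1 := by
    have h := claim (m + 1) (by omega)
    rwa [Tp_eq_bot P hn, sup_bot_eq] at h
  have hx2 : x - a ∈ Sp P a b false 2 := by
    rw [hxa]
    have e : a - (∑ k ∈ Finset.range m,
        ((Nat.factorial (k + 1 + 1) : F))⁻¹ • (P.mul x)^[k + 1] x) - a
        = -(∑ k ∈ Finset.range m,
        ((Nat.factorial (k + 1 + 1) : F))⁻¹ • (P.mul x)^[k + 1] x) := by abel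
    rw [e]
    refine Submodule.neg_mem _ (Submodule.sum_mem _ ?_)
    intro k _
    have hh := iter_mem_Sp P a b hx1 hx1 (k + 1)
    exact Submodule.smul_mem _ _ (Sp_mono P a b false (by omega) hh)
  cases m with
  | zero =>
      have ha0 : a = 0 := hn.2 a (.single a)
      have h0 : P.mul 0 b = 0 := by
        rw [← PreLieAlg.lmul_apply]; simp
      have hz : P.flowStar (0 + 1) Ω a b - P.mul a b = 0 := by
        simp [PreLieAlg.flowStar, PreLieAlg.flow, PreLieAlg.expL, ha0, h0]
      rw [hz]
      exact Submodule.zero_mem _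
  | succ m' =>
      have hmul : P.mul (x - a) b = P.mul x b - P.mul a b := by
        simp only [← PreLieAlg.lmul_apply, map_sub, LinearMap.sub_apply]
      have hsum : P.flowStar (m' + 1 + 1) Ω a b - P.mul a b
          = (∑ k ∈ Finset.range m',
              ((Nat.factorial (k + 1 + 1) : F))⁻¹ • (P.mul x)^[k + 1 + 1] b)
            + P.mul (x - a) b := by
        rw [hmul]
        simp only [PreLieAlg.flowStar, PreLieAlg.flow, PreLieAlg.expL]
        rw [Finset.sum_range_succ', Finset.sum_range_succ']
        simp only [zero_add, Nat.factorial_one, Nat.factorial_zero, Nat.cast_one,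
          inv_one, one_smul, Function.iterate_zero, Function.iterate_one, id_eq]
        abel
      rw [hsum]
      refine Submodule.add_mem _ (Submodule.sum_mem _ ?_) ?_
      · intro k _
        have hh := iter_mem_Sp P a b hx1 hb (k + 1 + 1)
        exact Submodule.smul_mem _ _ (Sp_mono P a b true (by omega) hh)
      · have hh := mul_mem_Sp P a b hx2 hb
        exact Sp_mono P a b true (by omega) hh
end

section
/- Let (A, +, ·) be a pre-Lie algebra over a field F of characteristic zero in which every product of 4 elements (with any distribution of brackets) is zero, and let Ω: A → A be the inverse of the map W. Then for all a ∈ A: Ω(a) = a − (1/2)·a·a + (1/4)·(a·a)·a + (1/12)·a·(a·a). -/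
open Filter Topology

theorem statement11 {F A : Type*} [Field F] [CharZero F] [AddCommGroup A] [Module F A]
    (P : PreLieAlg F A) (h4 : ∀ x : A, P.IsProd x 4 → x = 0)
    (Ω : A → A) (hΩ₁ : ∀ a, P.W 4 (Ω a) = a) (hΩ₂ : ∀ a, Ω (P.W 4 a) = a)
    (a : A) :
    Ω a = a - ((1 : F) / 2) • P.mul a a + ((1 : F) / 4) • P.mul (P.mul a a) a
      + ((1 : F) / 12) • P.mul a (P.mul a a) := by
  have hz : ∀ {x y : A} {n m : ℕ}, P.IsProd x n → P.IsProd y m → n + m = 4 →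
      P.mul x y = 0 := by
    intro x y n m hx hy h
    exact h4 _ (h ▸ PreLieAlg.IsProd.node hx hy)
  set aa := P.mul a a with haa
  set t1 := P.mul aa a with ht1
  set t2 := P.mul a aa with ht2
  have paa : P.IsProd aa 2 := .node (.single a) (.single a)
  have pt1 : P.IsProd t1 3 := .node paa (.single a)
  have pt2 : P.IsProd t2 3 := .node (.single a) paa
  have pt1' : P.IsProd t1 2 := .node (.single aa) (.single a)
  have pt2' : P.IsProd t2 2 := .node (.single a) (.single aa)
  have z1 : P.mul a t1 = 0 := hz (.single a) pt1 rfl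
  have z2 : P.mul a t2 = 0 := hz (.single a) pt2 rfl
  have z3 : P.mul aa aa = 0 := hz paa paa rfl
  have z4' : P.mul aa t1 = 0 := hz paa pt1' rfl
  have z5 : P.mul aa t2 = 0 := hz paa pt2' rfl
  have z6 : P.mul t1 a = 0 := hz pt1 (.single a) rfl
  have z7 : P.mul t2 a = 0 := hz pt2 (.single a) rfl
  have z8 : P.mul t1 aa = 0 := hz pt1' paa rfl
  have z9 : P.mul t2 aa = 0 := hz pt2' paa rfl
  have z10 : P.mul t1 t1 = 0 := hz pt1' pt1' rfl
  have z11 : P.mul t1 t2 = 0 := hz pt1' pt2' rfl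
  have z12 : P.mul t2 t1 = 0 := hz pt2' pt1' rfl
  have z13 : P.mul t2 t2 = 0 := hz pt2' pt2' rfl
  set b := a - ((1 : F) / 2) • aa + ((1 : F) / 4) • t1 + ((1 : F) / 12) • t2 with hb
  -- bilinear map
  let B : A →ₗ[F] A →ₗ[F] A := LinearMap.mk₂ F P.mul P.add_mul P.smul_mul P.mul_add P.mul_smul
  have hB : ∀ x y : A, P.mul x y = B x y := fun _ _ => rfl
  have hbb : P.mul b b = aa - ((1 : F) / 2) • t1 - ((1 : F) / 2) • t2 := by
    rw [hB, hb]
    simp only [map_add, map_sub, map_smul, LinearMap.add_apply, LinearMap.sub_apply,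
      LinearMap.smul_apply, ← hB, ← haa, ← ht1, ← ht2,
      z1, z2, z3, z4', z5, z6, z7, z8, z9, z10, z11, z12, z13,
      smul_zero, add_zero, sub_zero, zero_sub, smul_neg]
  have hbbb : P.mul b (P.mul b b) = t2 := by
    rw [hbb, hB, hb]
    simp only [map_add, map_sub, map_smul, LinearMap.add_apply, LinearMap.sub_apply,
      LinearMap.smul_apply, ← hB, ← haa, ← ht1, ← ht2,
      z1, z2, z3, z4', z5, z6, z7, z8, z9, z10, z11, z12, z13,
      smul_zero, add_zero, sub_zero, zero_sub, smul_neg]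
  have hbbbb : P.mul b (P.mul b (P.mul b b)) = 0 := by
    rw [hbbb, hB, hb]
    simp only [map_add, map_sub, map_smul, LinearMap.add_apply, LinearMap.sub_apply,
      LinearMap.smul_apply, ← hB, ← haa, ← ht1, ← ht2,
      z1, z2, z3, z4', z5, z6, z7, z8, z9, z10, z11, z12, z13,
      smul_zero, add_zero, sub_zero, zero_sub, smul_neg]
  have key : P.W 4 b = a := by
    rw [PreLieAlg.W]
    rw [Finset.sum_range_succ, Finset.sum_range_succ, Finset.sum_range_succ,
      Finset.sum_range_succ, Finset.sum_range_zero]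
    simp only [Function.iterate_succ_apply', Function.iterate_zero_apply]
    rw [hbbbb, hbbb, hbb]
    norm_num [Nat.factorial]
    rw [hb]
    module
  calc Ω a = Ω (P.W 4 b) := by rw [key]
    _ = b := hΩ₂ b
end

section
/- Let (A, +, ·) be a nilpotent associative algebra over a field F of characteristic zero (so in particular (A, +, ·) is a nilpotent pre-Lie algebra), let Ω: A → A be the inverse of the map W, and define a∘b = a + e^{L_{Ω(a)}}(b). Then for all a, b ∈ A: a∘b = a + b + a·b. -/
open Filter Topology

theorem statement12 {F A : Type*} [Field F] [CharZero F] [AddCommGroup A] [Module F A]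
    (P : PreLieAlg F A) (hassoc : ∀ a b c : A, P.mul (P.mul a b) c = P.mul a (P.mul b c))
    (n : ℕ) (hn : P.IsNilpotentOf n)
    (Ω : A → A) (hΩ₁ : ∀ a, P.W n (Ω a) = a) (hΩ₂ : ∀ a, Ω (P.W n a) = a)
    (a b : A) :
    P.flow n Ω a b = a + b + P.mul a b := by
  have hzero : ∀ c : A, P.mul 0 c = 0 := by
    intro c
    have := P.add_mul 0 0 c
    simp only [add_zero] at this
    exact left_eq_add.mp this
  -- iterate lemma
  have hiter : ∀ (x : A) (k : ℕ) (c : A),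
      (P.mul x)^[k + 1] c = P.mul ((P.mul x)^[k] x) c := by
    intro x k
    induction k with
    | zero => intro c; simp
    | succ k ih =>
      intro c
      rw [Function.iterate_succ_apply' (P.mul x) (k + 1) c, ih c, ← hassoc,
        Function.iterate_succ_apply' (P.mul x) k x]
  have hprod : ∀ (x : A) (k : ℕ), P.IsProd ((P.mul x)^[k] x) (k + 1) := by
    intro x k
    induction k with
    | zero => exact PreLieAlg.IsProd.single x
    | succ k ih =>
      rw [Function.iterate_succ_apply']
      have := PreLieAlg.IsProd.node (PreLieAlg.IsProd.single x) ih
      rwa [Nat.add_comm 1 (k + 1)] at this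
  -- sum pushes through mul on the left
  have hmulhom : ∀ (c : A) (s : Finset ℕ) (f : ℕ → A),
      P.mul (∑ k ∈ s, f k) c = ∑ k ∈ s, P.mul (f k) c := by
    intro c s f
    exact map_sum (AddMonoidHom.mk' (fun y => P.mul y c) (fun u v => P.add_mul u v c)) f s
  obtain ⟨hpos, hnil⟩ := hn
  obtain ⟨m, rfl⟩ := Nat.exists_eq_succ_of_ne_zero hpos.ne'
  set x := Ω a with hx
  have hWa : P.W (m + 1) x = a := hΩ₁ a
  have key : P.expL (m + 1) x b = b + P.mul a b := by
    rw [← hWa]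
    unfold PreLieAlg.expL PreLieAlg.W
    rw [hmulhom, Finset.sum_range_succ' (fun k => ((Nat.factorial k : F))⁻¹ • (P.mul x)^[k] b) m]
    have hlast : P.mul (((Nat.factorial (m + 1) : F))⁻¹ • (P.mul x)^[m] x) b = 0 := by
      rw [hnil _ (hprod x m), smul_zero, hzero]
    rw [Finset.sum_range_succ (fun k => P.mul (((Nat.factorial (k + 1) : F))⁻¹ • (P.mul x)^[k] x) b) m, hlast, add_zero]
    simp only [Nat.factorial_zero, Nat.cast_one, inv_one, one_smul, Function.iterate_zero_apply]
    rw [add_comm]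
    congr 1
    apply Finset.sum_congr rfl
    intro k _
    rw [hiter, P.smul_mul]
  rw [PreLieAlg.flow, ← hx, key, add_assoc]
end
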